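/- Let D be a bounded domain in ℂⁿ and {f_j} a sequence of holomorphic self-maps of D such that there is a constant c < 1 with k_D(f_j(z), f_j(w)) ≤ c·k_D(z, w) for all z, w ∈ D and all j, where k_D is the Kobayashi distance. Then every limit in the compact-open topology of the iterated function system F_j := f_j ∘ ⋯ ∘ f_1 is a constant map. -/

import Mathlib

open Metric Set Filter
open scoped ENNReal NNReal

noncomputable section

/-- The open unit disc in `ℂ`. -/
def uDisc : Set ℂ := Metric.ball 0 1

/-- The inverse hyperbolic tangent. -/
def artanh (x : ℝ) : ℝ := Real.log ((1 + x) / (1 - x)) / 2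

/-- The Poincaré (hyperbolic) distance on the unit disc. -/
def pDist (ζ η : ℂ) : ℝ :=
  artanh ‖(ζ - η) / (1 - (starRingEnd ℂ) ζ * η)‖

/-- Hyperbolic ball in the unit disc. -/
def hBall (z : ℂ) (r : ℝ) : Set ℂ := {w ∈ uDisc | pDist w z < r}

/-- Bloch radius of a subset of the unit disc. -/
def blochRadiusD (U : Set ℂ) : ℝ≥0∞ :=
  ⨆ (r : NNReal) (_ : ∃ z ∈ uDisc, hBall z (r : ℝ) ⊆ U), (r : ℝ≥0∞)

/-- `tanh` extended to `ℝ≥0∞`, with `tanh ∞ = 1`. -/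
def tanhE (x : ℝ≥0∞) : ℝ := if x = ⊤ then 1 else Real.tanh x.toReal

variable {E : Type*} [NormedAddCommGroup E] [NormedSpace ℂ E]

/-- Admissible values for the Lempert function of `D` between `z` and `w`. -/
def lemSet (D : Set E) (z w : E) : Set ℝ :=
  {c | ∃ (f : ℂ → E) (ζ : ℂ), DifferentiableOn ℂ f uDisc ∧ MapsTo f uDisc D ∧
    f 0 = z ∧ ζ ∈ uDisc ∧ f ζ = w ∧ c = pDist 0 ζ}

/-- The Kobayashi (pseudo)distance of `D`, defined via chains of analytic discs. -/
def kDist (D : Set E) (z w : E) : ℝ :=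
  sInf {s | ∃ (m : ℕ) (p : ℕ → E), p 0 = z ∧ p m = w ∧ (∀ i, i ≤ m → p i ∈ D) ∧
      s = ∑ i ∈ Finset.range m, sInf (lemSet D (p i) (p (i + 1)))}

/-- Kobayashi ball of center `z` and radius `r` in `D`. -/
def kBall (D : Set E) (z : E) (r : ℝ) : Set E := {w ∈ D | kDist D w z < r}

/-- Bloch radius of `X ⊆ D` with respect to the Kobayashi distance of `D`. -/
def blochRadius (D X : Set E) : ℝ≥0∞ :=
  ⨆ (r : NNReal) (_ : ∃ z ∈ D, kBall D z (r : ℝ) ⊆ X), (r : ℝ≥0∞)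

/-- The Kobayashi infinitesimal (pseudo)metric of `D`. -/
def kMetric (D : Set E) (z v : E) : ℝ :=
  sInf {c | ∃ (f : ℂ → E) (r : ℝ), DifferentiableOn ℂ f uDisc ∧ MapsTo f uDisc D ∧
    f 0 = z ∧ 0 < r ∧ deriv f 0 = r • v ∧ c = 1 / r}

/-- The hyperbolic Lipschitz constant `μ_D(X)` of `X` inside `D`. -/
def lipConst (D X : Set E) : ℝ :=
  sSup {t | ∃ z ∈ X, ∃ v : E, v ≠ 0 ∧ t = kMetric D z v / kMetric X z v}

/-- `comps f j = f j ∘ ⋯ ∘ f 0`, the iterated function system associated to `f`. -/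
def comps (f : ℕ → E → E) : ℕ → E → E
  | 0 => f 0
  | (j + 1) => f (j + 1) ∘ comps f j

/-- `F` is a limit, in the compact-open topology on `D`, of a subsequence of the
iterated function system associated to `f`. -/
def IFSLimit (D : Set E) (f : ℕ → E → E) (F : E → E) : Prop :=
  ∃ s : ℕ → ℕ, StrictMono s ∧
    TendstoLocallyUniformlyOn (fun j => comps f (s j)) F atTop D

/-- `X ⊆ D` is degenerate in `D`: every limit of every iterated function system of
holomorphic self-maps of `D` with image in `X` is constant. -/
def Degenerate (D X : Set E) : Prop :=
  ∀ f : ℕ → E → E, (∀ j, DifferentiableOn ℂ (f j) D ∧ MapsTo (f j) D X) →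
    ∀ F : E → E, IFSLimit D f F → ∃ c, ∀ z ∈ D, F z = c

/-- A complex geodesic of `D`: a holomorphic isometry from the Poincaré distance of
the unit disc to the Kobayashi distance of `D`. -/
def IsComplexGeodesic (D : Set E) (φ : ℂ → E) : Prop :=
  DifferentiableOn ℂ φ uDisc ∧ MapsTo φ uDisc D ∧
    ∀ ζ ∈ uDisc, ∀ η ∈ uDisc, kDist D (φ ζ) (φ η) = pDist ζ η

/-- A Lempert projection associated to the complex geodesic `φ`: a holomorphic
retraction of `D` onto `φ(𝔻)` with affine fibers. -/
def IsLempertProjection (D : Set E) (φ : ℂ → E) (ρ : E → E) : Prop :=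
  DifferentiableOn ℂ ρ D ∧ MapsTo ρ D (φ '' uDisc) ∧
    (∀ z ∈ D, ρ (ρ z) = ρ z) ∧ (∀ ζ ∈ uDisc, ρ (φ ζ) = φ ζ) ∧
    ∀ ζ ∈ uDisc, ∃ (L : E →ₗ[ℂ] ℂ) (c : ℂ), L ≠ 0 ∧
      {w ∈ D | ρ w = φ ζ} = {w ∈ D | L w = c}

/-- A Lempert projection device `(φ, ρ, ρ̃)`: a complex geodesic, an associated
Lempert projection, and the left inverse `ρ̃ = φ⁻¹ ∘ ρ`. -/
def IsLempertDevice (D : Set E) (φ : ℂ → E) (ρ : E → E) (ρt : E → ℂ) : Prop :=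
  IsComplexGeodesic D φ ∧ IsLempertProjection D φ ρ ∧
    ∀ z ∈ D, ρt z ∈ uDisc ∧ φ (ρt z) = ρ z

/-- `X` is 1-Bloch in `D`: there is `C > 0` such that for every Lempert projection
device, `ρ̃(X)` is contained in a Bloch subdomain of the disc of Bloch radius `< C`. -/
def OneBloch (D X : Set E) : Prop :=
  ∃ C > (0 : ℝ), ∀ (φ : ℂ → E) (ρ : E → E) (ρt : E → ℂ),
    IsLempertDevice D φ ρ ρt → ∃ U : Set ℂ, IsOpen U ∧ IsConnected U ∧ U ⊆ uDisc ∧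
      ρt '' X ⊆ U ∧ blochRadiusD U < ENNReal.ofReal C

/-- `X` is c-Bloch in `D`: there is `C > 0` such that for every Lempert projection
device, `ρ̃(X ∩ φ(𝔻))` is contained in a Bloch subdomain of Bloch radius `≤ C`. -/
def CBloch (D X : Set E) : Prop :=
  ∃ C > (0 : ℝ), ∀ (φ : ℂ → E) (ρ : E → E) (ρt : E → ℂ),
    IsLempertDevice D φ ρ ρt → ∃ U : Set ℂ, IsOpen U ∧ IsConnected U ∧ U ⊆ uDisc ∧
      ρt '' (X ∩ φ '' uDisc) ⊆ U ∧ blochRadiusD U ≤ ENNReal.ofReal C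



section Aux


lemma exists_entire_curve {E : Type*} [NormedAddCommGroup E] [NormedSpace ℂ E]
    {D : Set E} (hDo : IsOpen D) (hDc : IsPreconnected D) {z w : E}
    (hz : z ∈ D) (hw : w ∈ D) :
    ∃ g : ℂ → E, Differentiable ℂ g ∧ g 0 = z ∧ g 1 = w ∧
      ∀ t : ℝ, t ∈ Set.Icc (0:ℝ) 1 → g t ∈ D := by
  classical
  set A : Set E := {w' | ∃ g : ℂ → E, Differentiable ℂ g ∧ g 0 = z ∧ g 1 = w' ∧
      ∀ t : ℝ, t ∈ Set.Icc (0:ℝ) 1 → g t ∈ D} with hA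
  -- openness with quantitative ball
  have key : ∀ w' ∈ A, ∃ δ > 0, ball w' δ ⊆ A := by
    rintro w' ⟨g, hg, hg0, hg1, hgD⟩
    have hcont : Continuous fun t : ℝ => g t :=
      hg.continuous.comp Complex.continuous_ofReal
    set K : Set E := (fun t : ℝ => g t) '' Icc (0:ℝ) 1 with hK
    have hKc : IsCompact K := (isCompact_Icc).image hcont
    have hKD : K ⊆ D := by rintro x ⟨t, ht, rfl⟩; exact hgD t ht
    obtain ⟨δ, hδ, hth⟩ := hKc.exists_thickening_subset_open hDo hKD
    refine ⟨δ, hδ, fun w'' hw'' => ?_⟩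
    refine ⟨fun ζ => g ζ + ζ • (w'' - w'), ?_, by simp [hg0], by simp [hg1], ?_⟩
    · exact hg.add ((differentiable_id).smul_const _)
    · intro t ht
      apply hth
      rw [mem_thickening_iff]
      refine ⟨g t, ⟨t, ht, rfl⟩, ?_⟩
      have : dist (g t + (t:ℂ) • (w'' - w')) (g t) = ‖(t:ℂ)‖ * ‖w'' - w'‖ := by
        simp [dist_eq_norm, norm_smul]
      rw [this]
      have h1 : ‖(t:ℂ)‖ ≤ 1 := by
        rw [Complex.norm_real]
        rw [Real.norm_eq_abs, abs_of_nonneg ht.1]; exact ht.2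
      have h2 : ‖w'' - w'‖ < δ := by rw [← dist_eq_norm]; exact mem_ball.mp hw''
      calc ‖(t:ℂ)‖ * ‖w'' - w'‖ ≤ 1 * ‖w'' - w'‖ := by
            exact mul_le_mul_of_nonneg_right h1 (norm_nonneg _)
        _ < δ := by rwa [one_mul]
  have hAopen : IsOpen A := by
    rw [Metric.isOpen_iff]
    intro w' hw'
    obtain ⟨δ, hδ, hball⟩ := key w' hw'
    exact ⟨δ, hδ, hball⟩
  -- closedness in D
  have hcl : ∀ w' ∈ D, w' ∈ closure A → w' ∈ A := by
    intro w₀ hw₀ hwcl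
    obtain ⟨r, hr, hballD⟩ := Metric.isOpen_iff.mp hDo w₀ hw₀
    obtain ⟨w', hw'A, hw'near⟩ : ∃ w' ∈ A, dist w₀ w' < r / 2 := by
      have := Metric.mem_closure_iff.mp hwcl (r/2) (by positivity)
      obtain ⟨w', hw', hd⟩ := this
      exact ⟨w', hw', hd⟩
    obtain ⟨g, hg, hg0, hg1, hgD⟩ := hw'A
    by_cases hΔ : w₀ - w' = 0
    · have : w₀ = w' := by rwa [sub_eq_zero] at hΔ
      subst this; exact ⟨g, hg, hg0, hg1, hgD⟩
    have hcont : Continuous fun t : ℝ => g t :=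
      hg.continuous.comp Complex.continuous_ofReal
    set K : Set E := (fun t : ℝ => g t) '' Icc (0:ℝ) 1 with hK
    have hKc : IsCompact K := (isCompact_Icc).image hcont
    have hKD : K ⊆ D := by rintro x ⟨t, ht, rfl⟩; exact hgD t ht
    obtain ⟨δ, hδ, hth⟩ := hKc.exists_thickening_subset_open hDo hKD
    -- continuity of g at 1 (real)
    obtain ⟨η, hη, hηc⟩ : ∃ η > 0, ∀ t : ℝ, |t - 1| < η → dist (g t) w' < r / 4 := by
      have := (hcont.tendsto 1).eventually (Metric.ball_mem_nhds (g (1:ℝ)) (show (0:ℝ) < r/4 by positivity))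
      rw [Metric.eventually_nhds_iff] at this
      obtain ⟨η, hη, hb⟩ := this
      refine ⟨η, hη, fun t ht => ?_⟩
      have : g t ∈ ball (g (1:ℝ)) (r/4) := hb (by simpa [Real.dist_eq] using ht)
      simpa [show ((1:ℝ):ℂ) = 1 by norm_num, hg1] using this
    have hbase : (0:ℝ) ≤ 1 - min η 1 / 2 := by
      have : min η 1 / 2 ≤ 1 / 2 := by
        have := min_le_right η 1; linarith
      linarith
    have hbase1 : 1 - min η 1 / 2 < 1 := by
      have : 0 < min η 1 := lt_min hη one_pos
      linarith
    obtain ⟨N, hN⟩ : ∃ N : ℕ, (1 - min η 1 / 2) ^ (N + 1) * ‖w₀ - w'‖ < δ := by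
      have htend : Tendsto (fun N : ℕ => (1 - min η 1 / 2) ^ (N+1) * ‖w₀ - w'‖) atTop (nhds (0 * ‖w₀ - w'‖)) := by
        exact Tendsto.mul_const _
          ((tendsto_pow_atTop_nhds_zero_of_lt_one hbase hbase1).comp (tendsto_add_atTop_nat 1))
      rw [zero_mul] at htend
      have := htend.eventually (eventually_lt_nhds hδ)
      exact this.exists
    set M := N + 1 with hM
    refine ⟨fun ζ => g ζ + ζ ^ M • (w₀ - w'), hg.add (((differentiable_id).pow M).smul_const _),
      by simp [hg0, hM], by simp [hg1], ?_⟩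
    intro t ht
    rcases le_or_gt t (1 - min η 1 / 2) with hcase | hcase
    · apply hth
      rw [mem_thickening_iff]
      refine ⟨g t, ⟨t, ht, rfl⟩, ?_⟩
      have heq : dist (g t + (t:ℂ) ^ M • (w₀ - w')) (g t) = ‖(t:ℂ)‖ ^ M * ‖w₀ - w'‖ := by
        simp [dist_eq_norm, norm_smul, norm_pow]
      rw [heq]
      have h1 : ‖(t:ℂ)‖ ^ M ≤ (1 - min η 1 / 2) ^ M := by
        apply pow_le_pow_left₀ (norm_nonneg _)
        rw [Complex.norm_real, Real.norm_eq_abs, abs_of_nonneg ht.1]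
        exact hcase
      calc ‖(t:ℂ)‖ ^ M * ‖w₀ - w'‖ ≤ (1 - min η 1 / 2) ^ M * ‖w₀ - w'‖ :=
            mul_le_mul_of_nonneg_right h1 (norm_nonneg _)
        _ < δ := hN
    · apply hballD
      rw [mem_ball]
      have ht1 : |t - 1| < η := by
        have h2 : min η 1 ≤ η := min_le_left _ _
        have : 1 - η / 2 ≤ 1 - min η 1 / 2 := by linarith
        rw [abs_sub_lt_iff]; constructor <;> nlinarith [ht.2, min_le_left η 1]
      have hgt : dist (g t) w' < r / 4 := hηc t ht1
      have htM : ‖(1:ℂ) - (t:ℂ) ^ M‖ ≤ 1 := by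
        have : ((t:ℂ)) ^ M = ((t ^ M : ℝ) : ℂ) := by push_cast; ring
        rw [this]
        have h0 : (0:ℝ) ≤ t ^ M := pow_nonneg ht.1 _
        have h1 : t ^ M ≤ 1 := pow_le_one₀ ht.1 ht.2
        have : ((1:ℂ) - ((t ^ M : ℝ) : ℂ)) = (((1 - t ^ M : ℝ)) : ℂ) := by push_cast; ring
        rw [this, Complex.norm_real, Real.norm_eq_abs, abs_of_nonneg (by linarith)]
        linarith
      have hsplit : g t + (t:ℂ) ^ M • (w₀ - w') - w₀ = (g t - w') - ((1:ℂ) - (t:ℂ) ^ M) • (w₀ - w') := by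
        rw [sub_smul, one_smul]; abel
      have hgt' : ‖g t - w'‖ < r / 4 := by rw [← dist_eq_norm]; exact hgt
      have hww : ‖w₀ - w'‖ < r / 2 := by rw [← dist_eq_norm]; exact hw'near
      calc dist (g t + (t:ℂ) ^ M • (w₀ - w')) w₀
          = ‖(g t - w') - ((1:ℂ) - (t:ℂ) ^ M) • (w₀ - w')‖ := by rw [dist_eq_norm, hsplit]
        _ ≤ ‖g t - w'‖ + ‖(1:ℂ) - (t:ℂ) ^ M‖ * ‖w₀ - w'‖ := by
            rw [← norm_smul]; exact norm_sub_le _ _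
        _ < r / 4 + 1 * (r / 2) := by
            apply add_lt_add_of_lt_of_le hgt'
            calc ‖(1:ℂ) - (t:ℂ) ^ M‖ * ‖w₀ - w'‖ ≤ 1 * ‖w₀ - w'‖ :=
                  mul_le_mul_of_nonneg_right htM (norm_nonneg _)
              _ ≤ 1 * (r / 2) := by rw [one_mul, one_mul]; exact hww.le
        _ ≤ r := by linarith
  -- connectivity argument
  have hzA : z ∈ A := ⟨fun _ => z, differentiable_const _, rfl, rfl, fun t _ => hz⟩
  by_contra hcon
  have hwA : w ∉ A := fun h => hcon h
  set B : Set E := (closure A)ᶜ with hB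
  have hDAB : D ⊆ A ∪ B := by
    intro x hx
    by_cases hxc : x ∈ closure A
    · exact Or.inl (hcl x hx hxc)
    · exact Or.inr hxc
  have h1 : (D ∩ A).Nonempty := ⟨z, hz, hzA⟩
  have h2 : (D ∩ B).Nonempty := by
    refine ⟨w, hw, ?_⟩
    intro hwc
    exact hwA (hcl w hw hwc)
  obtain ⟨x, -, hxA, hxB⟩ := hDc A B hAopen (isOpen_compl_iff.mpr isClosed_closure) hDAB h1 h2
  exact hxB (subset_closure hxA)

-- membership lemma for the Möbius map
lemma moebius_mem {a : ℝ} (ha0 : 0 < a) (ha1 : a < 1) {ζ : ℂ} (hζ : ζ ∈ uDisc) :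
    (1 + (a:ℂ) * ζ) ≠ 0 ∧ (ζ + a) / (1 + (a:ℂ) * ζ) ∈ uDisc := by
  have hζ1 : ‖ζ‖ < 1 := by
    simpa [uDisc] using mem_ball_zero_iff.mp hζ
  have hne : (1 + (a:ℂ) * ζ) ≠ 0 := by
    intro h
    have : ‖(a:ℂ) * ζ‖ = 1 := by
      have : (a:ℂ) * ζ = -1 := by linear_combination h
      rw [this]; simp
    rw [norm_mul, Complex.norm_real, Real.norm_eq_abs, abs_of_pos ha0] at this
    nlinarith [norm_nonneg ζ]
  refine ⟨hne, ?_⟩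
  have hkey : Complex.normSq (ζ + a) < Complex.normSq (1 + (a:ℂ) * ζ) := by
    have h1 : Complex.normSq ζ < 1 := by
      rw [← Complex.sq_norm]; nlinarith [norm_nonneg ζ]
    simp only [Complex.normSq_apply, Complex.add_re, Complex.add_im, Complex.one_re,
      Complex.one_im, Complex.mul_re, Complex.mul_im, Complex.ofReal_re, Complex.ofReal_im]
    simp only [Complex.normSq_apply] at h1
    nlinarith [mul_pos (show (0:ℝ) < 1 - a * a by nlinarith)
      (show (0:ℝ) < 1 - ζ.re * ζ.re - ζ.im * ζ.im by nlinarith)]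
  rw [uDisc, mem_ball_zero_iff, norm_div]
  rw [div_lt_one (norm_pos_iff.mpr hne)]
  have := Complex.sq_norm (ζ + a)
  have := Complex.sq_norm (1 + (a:ℂ) * ζ)
  nlinarith [norm_nonneg (ζ + a), norm_nonneg (1 + (a:ℂ) * ζ),
    norm_pos_iff.mpr hne]

lemma re_pos_quot {ξ : ℂ} (hξ : ξ ∈ uDisc) :
    0 < ((1 + ξ) / (1 - ξ)).re ∧ (1 - ξ) ≠ 0 := by
  have hξ1 : ‖ξ‖ < 1 := by
    simpa [uDisc] using mem_ball_zero_iff.mp hξ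
  have h1 : Complex.normSq ξ < 1 := by
    rw [← Complex.sq_norm]; nlinarith [norm_nonneg ξ]
  have hne : (1 - ξ) ≠ 0 := by
    intro h
    have : ξ = 1 := by linear_combination -h
    rw [this] at hξ1; simp at hξ1
  refine ⟨?_, hne⟩
  rw [Complex.div_re, ← add_div]
  have hpos : 0 < Complex.normSq (1 - ξ) := Complex.normSq_pos.mpr hne
  apply div_pos _ hpos
  simp only [Complex.add_re, Complex.add_im, Complex.sub_re, Complex.sub_im,
    Complex.one_re, Complex.one_im]
  simp only [Complex.normSq_apply] at h1
  nlinarith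


section TubeDisc
open Complex

lemma real_tanh_pos_lt_one {y : ℝ} (hy : 0 < y) : 0 < Real.tanh y ∧ Real.tanh y < 1 := by
  rw [Real.tanh_eq_sinh_div_cosh]
  have hc : 0 < Real.cosh y := Real.cosh_pos y
  have hs : 0 < Real.sinh y := by
    rw [← Real.sinh_zero]; exact Real.sinh_lt_sinh.mpr hy
  constructor
  · positivity
  · rw [div_lt_one hc]
    nlinarith [Real.cosh_sub_sinh y, Real.exp_pos (-y)]

lemma log_tanh_ratio {y : ℝ} (hy : 0 < y) :
    Real.log ((1 + Real.tanh y) / (1 - Real.tanh y)) = 2 * y := by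
  have hc : 0 < Real.cosh y := Real.cosh_pos y
  have h1 : 1 + Real.tanh y = Real.exp y / Real.cosh y := by
    rw [Real.tanh_eq_sinh_div_cosh, ← Real.cosh_add_sinh]; field_simp
  have h2 : 1 - Real.tanh y = Real.exp (-y) / Real.cosh y := by
    rw [Real.tanh_eq_sinh_div_cosh, ← Real.cosh_sub_sinh]; field_simp
  rw [h1, h2]
  have hco : Real.exp y / Real.cosh y / (Real.exp (-y) / Real.cosh y)
      = Real.exp y / Real.exp (-y) := by
    field_simp
  rw [hco, ← Real.exp_sub, Real.log_exp]
  ring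

set_option maxHeartbeats 1000000 in
lemma exists_tube_disc {ε : ℝ} (hε : 0 < ε) :
    ∃ (h : ℂ → ℂ) (ζ₀ : ℂ), DifferentiableOn ℂ h uDisc ∧ h 0 = 0 ∧ ζ₀ ∈ uDisc ∧ h ζ₀ = 1 ∧
      ∀ ζ ∈ uDisc, ∃ t : ℝ, t ∈ Icc (0:ℝ) 1 ∧ dist (h ζ) ((t:ℝ):ℂ) < ε := by
  have hπ : (0:ℝ) < Real.pi := Real.pi_pos
  set δ : ℝ := min 1 (ε/2) with hδdef
  have hδ0 : 0 < δ := lt_min one_pos (by positivity)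
  have hδ1 : δ ≤ 1 := min_le_left _ _
  have hδε : 3 * δ / 2 < ε := by
    have : δ ≤ ε / 2 := min_le_right _ _
    nlinarith
  set y : ℝ := Real.pi ^ 2 / (4 * δ) with hydef
  have hy : 0 < y := by positivity
  set a : ℝ := Real.tanh y with hadef
  obtain ⟨ha0, ha1⟩ := real_tanh_pos_lt_one hy
  set m : ℂ → ℂ := fun ζ => (ζ + a) / (1 + (a:ℂ) * ζ) with hm
  set s : ℂ → ℂ := fun ξ => ((2 * δ / Real.pi : ℝ) : ℂ) * Complex.log ((1 + ξ) / (1 - ξ)) with hs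
  set h : ℂ → ℂ := fun ζ => (1 + Complex.cos (s (m ζ))) / 2 with hh
  have h0mem : (0:ℂ) ∈ uDisc := by simp [uDisc]
  have hamem : ((a:ℂ)) ∈ uDisc := by
    simp only [uDisc, mem_ball_zero_iff, Complex.norm_real, Real.norm_eq_abs]
    rwa [abs_of_pos ha0]
  have hζ₀mem : (-(a:ℂ)) ∈ uDisc := by
    simp only [uDisc, mem_ball_zero_iff, norm_neg, Complex.norm_real, Real.norm_eq_abs]
    rwa [abs_of_pos ha0]
  -- values of s on nonnegative reals
  have hsreal : ∀ x : ℝ, 0 ≤ x → x < 1 →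
      s ((x:ℝ):ℂ) = (((2 * δ / Real.pi) * Real.log ((1 + x) / (1 - x)) : ℝ) : ℂ) := by
    intro x hx0 hx1
    have hpos : (0:ℝ) ≤ (1 + x) / (1 - x) := by
      apply div_nonneg <;> linarith
    have : ((1:ℂ) + (x:ℂ)) / (1 - (x:ℂ)) = (((1 + x) / (1 - x) : ℝ) : ℂ) := by
      push_cast; ring
    rw [hs]; simp only [this, ← Complex.ofReal_log hpos]
    push_cast; ring
  -- h 0 = 0
  have hm0 : m 0 = (a:ℂ) := by rw [hm]; simp
  have hsa : s ((a:ℝ):ℂ) = ((Real.pi : ℝ) : ℂ) := by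
    rw [hsreal a ha0.le ha1, hadef, log_tanh_ratio hy]
    congr 1
    rw [hydef]
    field_simp
    ring
  have hval0 : h 0 = 0 := by
    rw [hh]; simp only [hm0, hsa]
    rw [← Complex.ofReal_cos, Real.cos_pi]
    norm_num
  -- h (-a) = 1
  have hmneg : m (-(a:ℂ)) = 0 := by
    rw [hm]
    have hne : (1 : ℂ) + (a:ℂ) * (-(a:ℂ)) ≠ 0 := by
      have : ((1 - a * a : ℝ) : ℂ) = 1 + (a:ℂ) * (-(a:ℂ)) := by push_cast; ring
      rw [← this]
      simp only [ne_eq, Complex.ofReal_eq_zero]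
      nlinarith
    field_simp
    ring
  have hval1 : h (-(a:ℂ)) = 1 := by
    have hs0 : s 0 = 0 := by simpa using hsreal 0 le_rfl one_pos
    simp only [hh, hmneg, hs0]
    simp
  -- differentiability
  have hdiff : DifferentiableOn ℂ h uDisc := by
    intro ζ hζ
    apply DifferentiableAt.differentiableWithinAt
    obtain ⟨hne, hmmem⟩ := moebius_mem ha0 ha1 hζ
    obtain ⟨hre, hne2⟩ := re_pos_quot hmmem
    have hdm : DifferentiableAt ℂ m ζ := by
      apply DifferentiableAt.div
      · fun_prop
      · fun_prop
      · exact hne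
    have hdq : DifferentiableAt ℂ (fun ξ => (1 + ξ) / (1 - ξ)) (m ζ) := by
      apply DifferentiableAt.div
      · fun_prop
      · fun_prop
      · exact hne2
    have hslit : (1 + m ζ) / (1 - m ζ) ∈ Complex.slitPlane :=
      Complex.mem_slitPlane_iff.mpr (Or.inl hre)
    have hdlog : DifferentiableAt ℂ Complex.log ((1 + m ζ) / (1 - m ζ)) :=
      Complex.differentiableAt_log hslit
    have hq : DifferentiableAt ℂ (Complex.log ∘ fun ξ => (1 + ξ) / (1 - ξ)) (m ζ) :=
      DifferentiableAt.comp (m ζ) hdlog hdq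
    have hcomp : DifferentiableAt ℂ ((Complex.log ∘ fun ξ => (1 + ξ) / (1 - ξ)) ∘ m) ζ :=
      DifferentiableAt.comp ζ hq hdm
    have : DifferentiableAt ℂ (fun ζ' => s (m ζ')) ζ := by
      simp only [hs]
      apply DifferentiableAt.const_mul
      exact hcomp
    rw [hh]
    apply DifferentiableAt.div_const
    exact (differentiableAt_const _).add (Complex.differentiable_cos.differentiableAt.comp ζ this)
  -- tube estimate
  refine ⟨h, -(a:ℂ), hdiff, hval0, hζ₀mem, hval1, ?_⟩
  intro ζ hζ
  obtain ⟨hne, hmmem⟩ := moebius_mem ha0 ha1 hζ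
  obtain ⟨hre, hne2⟩ := re_pos_quot hmmem
  set v : ℂ := (1 + m ζ) / (1 - m ζ) with hv
  set w : ℂ := s (m ζ) with hw
  -- |Im w| < δ
  have harg : |Complex.arg v| < Real.pi / 2 :=
    Complex.abs_arg_lt_pi_div_two_iff.mpr (Or.inl hre)
  have hwim : |w.im| < δ := by
    have : w.im = (2 * δ / Real.pi) * Complex.arg v := by
      rw [hw, hs]
      simp [Complex.log_im]
      exact Or.inl rfl
    rw [this, abs_mul, abs_of_pos (by positivity : (0:ℝ) < 2 * δ / Real.pi)]
    calc 2 * δ / Real.pi * |Complex.arg v| < 2 * δ / Real.pi * (Real.pi / 2) := by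
          apply mul_lt_mul_of_pos_left harg (by positivity)
      _ = δ := by field_simp
  -- decompose cos w
  have hcosw : Complex.cos w = (((Real.cos w.re * Real.cosh w.im) : ℝ) : ℂ)
      - (((Real.sin w.re * Real.sinh w.im) : ℝ) : ℂ) * Complex.I := by
    conv_lhs => rw [← Complex.re_add_im w]
    rw [Complex.cos_add_mul_I]
    rw [← Complex.ofReal_cos, ← Complex.ofReal_sin, ← Complex.ofReal_cosh, ← Complex.ofReal_sinh]
    push_cast
    ring
  set ρ : ℝ := Real.cos w.re * Real.cosh w.im with hρ
  set σ : ℝ := Real.sin w.re * Real.sinh w.im with hσ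
  have hρbound : |ρ| ≤ Real.cosh δ := by
    rw [hρ, abs_mul]
    have h1 : |Real.cos w.re| ≤ 1 := Real.abs_cos_le_one _
    have h2 : |Real.cosh w.im| ≤ Real.cosh δ := by
      rw [abs_of_pos (Real.cosh_pos _)]
      rw [Real.cosh_le_cosh]
      rw [abs_of_pos hδ0]
      exact hwim.le
    calc |Real.cos w.re| * |Real.cosh w.im| ≤ 1 * Real.cosh δ := by
          apply mul_le_mul h1 h2 (abs_nonneg _) one_pos.le
      _ = Real.cosh δ := one_mul _
  have hσbound : |σ| ≤ Real.sinh δ := by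
    rw [hσ, abs_mul]
    have h1 : |Real.sin w.re| ≤ 1 := Real.abs_sin_le_one _
    have h2 : |Real.sinh w.im| ≤ Real.sinh δ := by
      rw [Real.abs_sinh]
      exact Real.sinh_le_sinh.mpr hwim.le
    calc |Real.sin w.re| * |Real.sinh w.im| ≤ 1 * Real.sinh δ := by
          apply mul_le_mul h1 h2 (abs_nonneg _) one_pos.le
      _ = Real.sinh δ := one_mul _
  -- nearest point on [-1,1]
  set t₀ : ℝ := max (-1) (min 1 ρ) with ht₀
  have ht₀mem : t₀ ∈ Icc (-1:ℝ) 1 := by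
    constructor
    · exact le_max_left _ _
    · rw [ht₀, max_le_iff]
      exact ⟨by norm_num, min_le_left _ _⟩
  have hρt₀ : |ρ - t₀| ≤ Real.cosh δ - 1 := by
    have hc1 : (1:ℝ) ≤ Real.cosh δ := Real.one_le_cosh δ
    rcases le_total ρ (-1) with hcase | hcase
    · have : t₀ = -1 := by
        rw [ht₀, max_eq_left]
        exact le_trans (min_le_right _ _) hcase
      rw [this]
      rw [abs_le] at hρbound ⊢
      constructor <;> nlinarith [hρbound.1, hρbound.2]
    · rcases le_total 1 ρ with hcase2 | hcase2
      · have : t₀ = 1 := by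
          rw [ht₀, min_eq_left hcase2, max_eq_right (by norm_num)]
        rw [this]
        rw [abs_le] at hρbound ⊢
        constructor <;> nlinarith [hρbound.1, hρbound.2]
      · have : t₀ = ρ := by
          rw [ht₀, min_eq_right hcase2, max_eq_right hcase]
        rw [this]
        simpa using by linarith
  -- distance bound
  have hdistbound : ‖Complex.cos w - ((t₀:ℝ):ℂ)‖ ≤ Real.exp δ - 1 := by
    have hre' : (Complex.cos w - ((t₀:ℝ):ℂ)).re = ρ - t₀ := by
      rw [hcosw]; simp
    have him' : (Complex.cos w - ((t₀:ℝ):ℂ)).im = -σ := by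
      rw [hcosw]; simp
    calc ‖Complex.cos w - ((t₀:ℝ):ℂ)‖
        ≤ |(Complex.cos w - ((t₀:ℝ):ℂ)).re| + |(Complex.cos w - ((t₀:ℝ):ℂ)).im| :=
          Complex.norm_le_abs_re_add_abs_im _
      _ = |ρ - t₀| + |σ| := by rw [hre', him', abs_neg]
      _ ≤ (Real.cosh δ - 1) + Real.sinh δ := add_le_add hρt₀ hσbound
      _ = Real.exp δ - 1 := by
          rw [← Real.cosh_add_sinh]; ring
  refine ⟨(1 + t₀)/2, ⟨by linarith [ht₀mem.1], by linarith [ht₀mem.2]⟩, ?_⟩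
  have hheq : h ζ - (((1 + t₀)/2 : ℝ):ℂ) = (Complex.cos w - ((t₀:ℝ):ℂ)) / 2 := by
    rw [hh]
    push_cast
    ring
  rw [Complex.dist_eq, hheq, norm_div]
  simp only [Complex.norm_two]
  have hexp : Real.exp δ - 1 ≤ 3 * δ := by
    have ha1 : -δ + 1 ≤ Real.exp (-δ) := Real.add_one_le_exp (-δ)
    have hb : Real.exp δ * (1 - δ) ≤ 1 := by
      calc Real.exp δ * (1 - δ) ≤ Real.exp δ * Real.exp (-δ) := by
            apply mul_le_mul_of_nonneg_left (by linarith) (Real.exp_pos δ).le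
        _ = 1 := by rw [← Real.exp_add]; simp
    have hc : Real.exp δ ≤ 3 := by
      have h1 : Real.exp δ ≤ Real.exp 1 := Real.exp_le_exp.mpr hδ1
      have h2 : Real.exp 1 < 2.7182818286 := Real.exp_one_lt_d9
      nlinarith
    nlinarith [Real.exp_pos δ]
  calc ‖Complex.cos w - ((t₀:ℝ):ℂ)‖ / 2 ≤ (Real.exp δ - 1) / 2 := by linarith
    _ ≤ 3 * δ / 2 := by linarith
    _ < ε := hδε

end TubeDisc


lemma artanh_ge_half {x : ℝ} (hx0 : 0 ≤ x) (hx1 : x < 1) : x / 2 ≤ artanh x := by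
  rw [artanh]
  have h1 : Real.log (1 - x) ≤ -x := by
    have := Real.log_le_sub_one_of_pos (show (0:ℝ) < 1 - x by linarith)
    linarith
  have h2 : 0 ≤ Real.log (1 + x) := Real.log_nonneg (by linarith)
  have h3 : Real.log ((1 + x) / (1 - x)) = Real.log (1 + x) - Real.log (1 - x) :=
    Real.log_div (by linarith) (by linarith)
  rw [h3]
  linarith

lemma pDist_zero_left (ζ : ℂ) : pDist 0 ζ = artanh ‖ζ‖ := by
  rw [pDist]
  simp

lemma lemSet_nonempty {D : Set E} (hDo : IsOpen D) (hDc : IsPreconnected D)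
    {z w : E} (hz : z ∈ D) (hw : w ∈ D) : (lemSet D z w).Nonempty := by
  obtain ⟨g, hg, hg0, hg1, hgD⟩ := exists_entire_curve hDo hDc hz hw
  set S : Set ℂ := (fun t : ℝ => ((t:ℝ):ℂ)) '' Icc (0:ℝ) 1 with hS
  have hSc : IsCompact S := isCompact_Icc.image Complex.continuous_ofReal
  have hU : IsOpen (g ⁻¹' D) := hDo.preimage hg.continuous
  have hSU : S ⊆ g ⁻¹' D := by rintro x ⟨t, ht, rfl⟩; exact hgD t ht
  obtain ⟨ε, hε, hth⟩ := hSc.exists_thickening_subset_open hU hSU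
  obtain ⟨h, ζ₀, hdiff, h0, hζ₀, h1, htube⟩ := exists_tube_disc hε
  refine ⟨pDist 0 ζ₀, g ∘ h, ζ₀, ?_, ?_, ?_, hζ₀, ?_, rfl⟩
  · exact fun ζ hζ => (hg.differentiableAt.comp_differentiableWithinAt ζ (hdiff ζ hζ))
  · intro ζ hζ
    obtain ⟨t, ht, hd⟩ := htube ζ hζ
    have : h ζ ∈ thickening ε S := by
      rw [mem_thickening_iff]
      exact ⟨(t:ℂ), ⟨t, ht, rfl⟩, hd⟩
    exact hth this
  · show g (h 0) = z
    rw [h0, hg0]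
  · show g (h ζ₀) = w
    rw [h1, hg1]

lemma lemSet_lower {D : Set E} {R : ℝ} (hR0 : 0 < R) (hRD : D ⊆ ball 0 R)
    {z w : E} {x : ℝ} (hx : x ∈ lemSet D z w) : ‖w - z‖ / (4 * R) ≤ x := by
  obtain ⟨f, ζ, hfd, hfm, hf0, hζ, hfζ, rfl⟩ := hx
  have hζ1 : ‖ζ‖ < 1 := by
    simpa [uDisc] using mem_ball_zero_iff.mp hζ
  have hmaps : MapsTo f (ball (0:ℂ) 1) (ball (f 0) (2 * R)) := by
    intro ξ hξ
    have h1 : f ξ ∈ D := hfm hξ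
    have h2 : f 0 ∈ D := hfm (by simp [uDisc] : (0:ℂ) ∈ uDisc)
    have h3 : ‖f ξ‖ < R := mem_ball_zero_iff.mp (hRD h1)
    have h4 : ‖f 0‖ < R := mem_ball_zero_iff.mp (hRD h2)
    rw [mem_ball, dist_eq_norm]
    calc ‖f ξ - f 0‖ ≤ ‖f ξ‖ + ‖f 0‖ := norm_sub_le _ _
      _ < 2 * R := by linarith
  have hsch := Complex.dist_le_div_mul_dist_of_mapsTo_ball hfd (hmaps.mono_right ball_subset_closedBall)
    (show ζ ∈ ball (0:ℂ) 1 from hζ)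
  rw [hf0, hfζ] at hsch
  have hd : dist w z ≤ 2 * R * ‖ζ‖ := by
    have : dist ζ (0:ℂ) = ‖ζ‖ := by simp [Complex.dist_eq]
    rw [this] at hsch
    calc dist w z ≤ 2 * R / 1 * ‖ζ‖ := hsch
      _ = 2 * R * ‖ζ‖ := by ring
  rw [pDist_zero_left]
  have h5 : ‖w - z‖ / (4 * R) ≤ ‖ζ‖ / 2 := by
    rw [div_le_div_iff₀ (by positivity) (by norm_num)]
    rw [← dist_eq_norm] at *
    nlinarith
  exact h5.trans (artanh_ge_half (norm_nonneg ζ) hζ1)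

lemma kDist_lower {D : Set E} (hDo : IsOpen D) (hDc : IsPreconnected D)
    {R : ℝ} (hR0 : 0 < R) (hRD : D ⊆ ball 0 R)
    {z w : E} (hz : z ∈ D) (hw : w ∈ D) : ‖z - w‖ / (4 * R) ≤ kDist D z w := by
  rw [kDist]
  apply le_csInf
  · refine ⟨sInf (lemSet D z w), 1, fun i => if i = 0 then z else w, by simp, by simp, ?_, by simp⟩
    intro i hi
    by_cases h : i = 0 <;> simp [h, hz, hw]
  · rintro b ⟨m, p, hp0, hpm, hpD, rfl⟩
    have hterm : ∀ i ∈ Finset.range m,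
        ‖p (i+1) - p i‖ / (4 * R) ≤ sInf (lemSet D (p i) (p (i + 1))) := by
      intro i hi
      rw [Finset.mem_range] at hi
      apply le_csInf (lemSet_nonempty hDo hDc (hpD i hi.le) (hpD (i+1) hi))
      intro x hx
      exact lemSet_lower hR0 hRD hx
    calc ‖z - w‖ / (4 * R)
        = dist (p 0) (p m) / (4 * R) := by rw [hp0, hpm, dist_eq_norm]
      _ ≤ (∑ i ∈ Finset.range m, dist (p i) (p (i+1))) / (4 * R) := by
          apply div_le_div_of_nonneg_right ?_ (by positivity)
          · exact dist_le_range_sum_dist p m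
      _ = ∑ i ∈ Finset.range m, ‖p (i+1) - p i‖ / (4 * R) := by
          rw [Finset.sum_div]
          congr 1; ext i; rw [dist_eq_norm, norm_sub_rev]
      _ ≤ ∑ i ∈ Finset.range m, sInf (lemSet D (p i) (p (i + 1))) :=
          Finset.sum_le_sum hterm

end Aux

set_option maxHeartbeats 2000000 in
/-- contraction mapping principle: uniform Kobayashi contractions
have only constant IFS limits. -/
theorem stmt13 {n : ℕ} (D : Set (EuclideanSpace ℂ (Fin n)))
    (hDo : IsOpen D) (hDc : IsConnected D) (hDb : Bornology.IsBounded D)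
    (f : ℕ → EuclideanSpace ℂ (Fin n) → EuclideanSpace ℂ (Fin n))
    (hf : ∀ j, DifferentiableOn ℂ (f j) D ∧ MapsTo (f j) D D)
    (c : ℝ) (hc : c < 1)
    (hcontr : ∀ j, ∀ z ∈ D, ∀ w ∈ D, kDist D (f j z) (f j w) ≤ c * kDist D z w)
    (F : EuclideanSpace ℂ (Fin n) → EuclideanSpace ℂ (Fin n))
    (hF : IFSLimit D f F) :
    ∃ p, ∀ z ∈ D, F z = p := by
  obtain ⟨σ, hσ, hTLU⟩ := hF
  rcases D.eq_empty_or_nonempty with rfl | ⟨z₀, hz₀⟩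
  · exact ⟨0, by simp⟩
  obtain ⟨R, hR0, hRD⟩ := hDb.subset_ball_lt 0 0
  have hDc' : IsPreconnected D := hDc.isPreconnected
  -- maps
  have hmaps : ∀ j, MapsTo (comps f j) D D := by
    intro j
    induction j with
    | zero => exact (hf 0).2
    | succ j ih => exact (hf (j+1)).2.comp ih
  have hk0 : ∀ z ∈ D, ∀ w ∈ D, 0 ≤ kDist D z w := by
    intro z hz w hw
    have := kDist_lower hDo hDc' hR0 hRD hz hw
    have h2 : (0:ℝ) ≤ ‖z - w‖ / (4 * R) := by positivity
    linarith
  set c' : ℝ := max c 0 with hc'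
  have hc'0 : 0 ≤ c' := le_max_right _ _
  have hc'1 : c' < 1 := max_lt hc one_pos
  have hcc' : c ≤ c' := le_max_left _ _
  have key : ∀ j, ∀ z ∈ D, ∀ w ∈ D,
      kDist D (comps f j z) (comps f j w) ≤ c' ^ (j+1) * kDist D z w := by
    intro j
    induction j with
    | zero =>
      intro z hz w hw
      calc kDist D (comps f 0 z) (comps f 0 w) ≤ c * kDist D z w := hcontr 0 z hz w hw
        _ ≤ c' * kDist D z w := mul_le_mul_of_nonneg_right hcc' (hk0 z hz w hw)
        _ = c' ^ (0+1) * kDist D z w := by ring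
    | succ j ih =>
      intro z hz w hw
      have hz' : comps f j z ∈ D := hmaps j hz
      have hw' : comps f j w ∈ D := hmaps j hw
      calc kDist D (comps f (j+1) z) (comps f (j+1) w)
          = kDist D (f (j+1) (comps f j z)) (f (j+1) (comps f j w)) := rfl
        _ ≤ c * kDist D (comps f j z) (comps f j w) := hcontr (j+1) _ hz' _ hw'
        _ ≤ c' * kDist D (comps f j z) (comps f j w) :=
            mul_le_mul_of_nonneg_right hcc' (hk0 _ hz' _ hw')
        _ ≤ c' * (c' ^ (j+1) * kDist D z w) :=
            mul_le_mul_of_nonneg_left (ih z hz w hw) hc'0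
        _ = c' ^ (j+1+1) * kDist D z w := by ring
  -- main: F is constant
  have hconst : ∀ z ∈ D, ∀ w ∈ D, F z = F w := by
    intro z hz w hw
    have hdistb : ∀ j : ℕ, dist (comps f (σ j) z) (comps f (σ j) w)
        ≤ 4 * R * (c' ^ (σ j + 1) * kDist D z w) := by
      intro j
      have h1 := kDist_lower hDo hDc' hR0 hRD (hmaps (σ j) hz) (hmaps (σ j) hw)
      have h2 := key (σ j) z hz w hw
      rw [dist_eq_norm, ← div_le_iff₀' (by positivity : (0:ℝ) < 4 * R)]
      calc ‖comps f (σ j) z - comps f (σ j) w‖ / (4 * R)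
          ≤ kDist D (comps f (σ j) z) (comps f (σ j) w) := h1
        _ ≤ c' ^ (σ j + 1) * kDist D z w := h2
    have htend : Tendsto (fun j : ℕ => 4 * R * (c' ^ (σ j + 1) * kDist D z w)) atTop
        (nhds 0) := by
      have h1 : Tendsto (fun j : ℕ => σ j + 1) atTop atTop :=
        tendsto_atTop_mono (fun j => Nat.le_succ (σ j)) hσ.tendsto_atTop
      have h2 : Tendsto (fun j : ℕ => c' ^ (σ j + 1)) atTop (nhds 0) :=
        (tendsto_pow_atTop_nhds_zero_of_lt_one hc'0 hc'1).comp h1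
      have h3 := (h2.mul_const (kDist D z w)).const_mul (4 * R)
      simpa using h3
    have hza : Tendsto (fun j => comps f (σ j) z) atTop (nhds (F z)) :=
      hTLU.tendsto_at hz
    have hwa : Tendsto (fun j => comps f (σ j) w) atTop (nhds (F w)) :=
      hTLU.tendsto_at hw
    have hdisttend : Tendsto (fun j => dist (comps f (σ j) z) (comps f (σ j) w)) atTop
        (nhds (dist (F z) (F w))) := hza.dist hwa
    have : dist (F z) (F w) ≤ 0 :=
      le_of_tendsto_of_tendsto' hdisttend htend hdistb
    exact dist_le_zero.mp this
  exact ⟨F z₀, fun z hz => hconst z hz z₀ hz₀⟩
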